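/- arXiv:1505.02500 — 2 statements merged into one kernel-verified Lean document; each statement's English description precedes it below -/
import Mathlib

section
/- Let k ≥ 2 and let κ be an infinite cardinal. Suppose there exists n ∈ ℕ such that for every cardinal λ with 1 ≤ λ < κ there is an n-colouring of G(λ) = ⊕_{σ<λ} ℚ with the property that no infinite subset X of G(λ) has FS_k(X) ∪ {k·x : x ∈ X} monochromatic. Then there is a 2n-colouring of G(κ) = ⊕_{σ<κ} ℚ such that no infinite subset X of G(κ) has FS_k(X) ∪ {k·x : x ∈ X} monochromatic. -/
open Cardinal

/-- `G κ` is the direct sum of `κ` copies of `ℚ`. -/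
def G (κ : Cardinal) : Type _ := κ.out →₀ ℚ

noncomputable instance (κ : Cardinal) : AddCommGroup (G κ) := Finsupp.instAddCommGroup

/-- Sums of `k` distinct elements of `X`. -/
def FS {α : Type*} [AddCommMonoid α] (k : ℕ) (X : Set α) : Set α :=
  {y | ∃ F : Finset α, ↑F ⊆ X ∧ F.card = k ∧ y = ∑ x ∈ F, x}

/-- `X` has `FS_k(X) ∪ {k·x : x ∈ X}` monochromatic for the colouring `c`. -/
def Mono {α β : Type*} [AddCommMonoid α] (k : ℕ) (c : α → β) (X : Set α) : Prop :=
  ∃ i : β, ∀ y ∈ FS k X ∪ (fun x => k • x) '' X, c y = i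

/-! ### Auxiliary definitions and lemmas -/

instance (κ : Cardinal) : FunLike (G κ) κ.out ℚ := Finsupp.instFunLike

noncomputable def qbit (k : ℕ) (q : ℚ) : Fin 2 :=
  if Even (padicValRat k.minFac q / (padicValNat k.minFac k : ℤ)) then 0 else 1

lemma qbit_k_mul (k : ℕ) (hk : 2 ≤ k) (q : ℚ) (hq : q ≠ 0) :
    qbit k ((k : ℚ) * q) ≠ qbit k q := by
  have hk1 : k ≠ 1 := by omega
  have hp : Nat.Prime k.minFac := Nat.minFac_prime hk1
  haveI : Fact (Nat.Prime k.minFac) := ⟨hp⟩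
  have hk0 : (k : ℚ) ≠ 0 := by positivity
  have hmul : padicValRat k.minFac ((k : ℚ) * q) =
      padicValRat k.minFac (k : ℚ) + padicValRat k.minFac q :=
    padicValRat.mul hk0 hq
  have hknat : padicValRat k.minFac (k : ℚ) = (padicValNat k.minFac k : ℤ) :=
    padicValRat.of_nat
  have hep : 1 ≤ padicValNat k.minFac k :=
    one_le_padicValNat_of_dvd (by omega) (Nat.minFac_dvd k)
  set e : ℤ := (padicValNat k.minFac k : ℤ) with he
  have he0 : e ≠ 0 := by omega
  set v : ℤ := padicValRat k.minFac q with hv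
  have hdiv : (e + v) / e = v / e + 1 := by
    rw [add_comm]
    have := Int.add_mul_ediv_right v 1 he0
    simpa using this
  unfold qbit
  rw [hmul, hknat, ← he, ← hv, hdiv]
  have hne : Even (v / e + 1) ↔ ¬ Even (v / e) := Int.even_add_one
  rcases Int.even_or_odd (v / e) with h | h
  · rw [if_pos h, if_neg (by rw [hne]; exact not_not_intro h)]
    decide
  · rw [if_neg (Int.not_even_iff_odd.2 h), if_pos (hne.2 (Int.not_even_iff_odd.2 h))]
    decide

section Aux

variable {κ : Cardinal}

/-- Evaluation at a point, as an additive homomorphism. -/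
noncomputable def evalH (a : κ.out) : G κ →+ ℚ :=
  AddMonoidHom.mk' (fun x => x a) (fun x y => Finsupp.add_apply x y a)

lemma evalH_apply (a : κ.out) (x : G κ) : evalH a x = x a := rfl

/-- The cardinality of the closed initial segment below `α`. -/
noncomputable def lamA (e : κ.out ≃ κ.ord.ToType) (α : κ.ord.ToType) : Cardinal :=
  #{a : κ.out // e a ≤ α}

lemma one_le_lamA (e : κ.out ≃ κ.ord.ToType) (α : κ.ord.ToType) : 1 ≤ lamA e α :=
  Cardinal.one_le_iff_ne_zero.2 (Cardinal.mk_ne_zero_iff.2 ⟨⟨e.symm α, by simp⟩⟩)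

lemma lamA_lt (hκ : ℵ₀ ≤ κ) (e : κ.out ≃ κ.ord.ToType) (α : κ.ord.ToType) :
    lamA e α < κ := by
  haveI : IsWellOrder κ.ord.ToType (· < ·) := isWellOrder_lt
  have e1 : lamA e α = #{b : κ.ord.ToType // b ≤ α} :=
    Cardinal.mk_congr (e.subtypeEquiv (fun a => Iff.rfl))
  have h1 := Ordinal.typein_lt_self α
  have h4 : #{y : κ.ord.ToType // y < α} =
      (Ordinal.typein (α := κ.ord.ToType) (· < ·) α).card :=
    (Ordinal.card_typein α).symm
  have h3 : #{y : κ.ord.ToType // y < α} < κ := by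
    rw [h4]; exact Cardinal.lt_ord.1 h1
  have hle : #{b : κ.ord.ToType // b ≤ α} ≤ #{b : κ.ord.ToType // b < α} + 1 := by
    rw [← Cardinal.mk_option]
    refine Cardinal.mk_le_of_injective
      (f := fun b => if h : b.1 < α then some ⟨b.1, h⟩ else none) ?_
    rintro ⟨b, hb⟩ ⟨b', hb'⟩ h
    simp only at h
    by_cases h1 : b < α <;> by_cases h2 : b' < α
    · rw [dif_pos h1, dif_pos h2] at h
      simp only [Option.some.injEq, Subtype.mk.injEq] at h
      exact Subtype.ext h
    · rw [dif_pos h1, dif_neg h2] at h; exact absurd h (by simp)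
    · rw [dif_neg h1, dif_pos h2] at h; exact absurd h (by simp)
    · have e1 : b = α := le_antisymm hb (not_lt.1 h1)
      have e2 : b' = α := le_antisymm hb' (not_lt.1 h2)
      exact Subtype.ext (e1.trans e2.symm)
  rw [e1]
  exact lt_of_le_of_lt hle (Cardinal.add_lt_of_lt hκ h3 (one_lt_aleph0.trans_le hκ))

/-- A bijection between the closed initial segment and the index type of `G (lamA e α)`. -/
noncomputable def gA (e : κ.out ≃ κ.ord.ToType) (α : κ.ord.ToType) :
    {a : κ.out // e a ≤ α} ≃ (lamA e α).out :=
  Classical.choice (Cardinal.eq.1 ((Cardinal.mk_out (lamA e α)).symm))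

open scoped Classical in
/-- Restriction of an element of `G κ` to the closed initial segment below `α`,
viewed in `G (lamA e α)`. -/
noncomputable def psiA (e : κ.out ≃ κ.ord.ToType) (α : κ.ord.ToType) (x : G κ) :
    G (lamA e α) :=
  Finsupp.equivMapDomain (gA e α) (Finsupp.subtypeDomain (fun a => e a ≤ α) x)

lemma psiA_apply (e : κ.out ≃ κ.ord.ToType) (α : κ.ord.ToType) (x : G κ)
    (m : (lamA e α).out) : psiA e α x m = x ((gA e α).symm m).1 := by
  classical
  show Finsupp.equivMapDomain _ _ m = _
  erw [Finsupp.equivMapDomain_apply, Finsupp.subtypeDomain_apply]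

lemma psiA_add (e : κ.out ≃ κ.ord.ToType) (α : κ.ord.ToType) (x y : G κ) :
    psiA e α (x + y) = psiA e α x + psiA e α y := by
  apply Finsupp.ext
  intro m
  have h1 : (psiA e α x + psiA e α y) m = psiA e α x m + psiA e α y m :=
    Finsupp.add_apply _ _ _
  have h2 : (x + y) ((gA e α).symm m).1 = x ((gA e α).symm m).1 + y ((gA e α).symm m).1 :=
    Finsupp.add_apply _ _ _
  exact (psiA_apply e α (x + y) m).trans (h2.trans ((congrArg₂ (· + ·) (psiA_apply e α x m)
    (psiA_apply e α y m)).symm.trans h1.symm))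

/-- `psiA` as an additive homomorphism. -/
noncomputable def psiH (e : κ.out ≃ κ.ord.ToType) (α : κ.ord.ToType) :
    G κ →+ G (lamA e α) :=
  AddMonoidHom.mk' (psiA e α) (psiA_add e α)

lemma psiA_nsmul (e : κ.out ≃ κ.ord.ToType) (α : κ.ord.ToType) (kk : ℕ) (x : G κ) :
    psiA e α (kk • x) = kk • psiA e α x :=
  map_nsmul (psiH e α) kk x

lemma psiA_injOn (e : κ.out ≃ κ.ord.ToType) (α : κ.ord.ToType) (x y : G κ)
    (hx : ∀ a ∈ Finsupp.support x, e a ≤ α) (hy : ∀ a ∈ Finsupp.support y, e a ≤ α)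
    (h : psiA e α x = psiA e α y) : x = y := by
  apply Finsupp.ext
  intro a
  by_cases ha : e a ≤ α
  · have hx' : psiA e α x (gA e α ⟨a, ha⟩) = psiA e α y (gA e α ⟨a, ha⟩) := by rw [h]
    rw [psiA_apply, psiA_apply, Equiv.symm_apply_apply] at hx'
    exact hx'
  · have hxa : x a = 0 := by
      by_contra hne
      exact ha (hx a (Finsupp.mem_support_iff.2 hne))
    have hya : y a = 0 := by
      by_contra hne
      exact ha (hy a (Finsupp.mem_support_iff.2 hne))
    erw [hxa, hya]

end Aux

theorem stmt_5 (k : ℕ) (hk : 2 ≤ k) (κ : Cardinal) (hκ : ℵ₀ ≤ κ) (n : ℕ)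
    (hn : ∀ lam : Cardinal, 1 ≤ lam → lam < κ →
      ∃ c : G lam → Fin n, ¬ ∃ X : Set (G lam), X.Infinite ∧ Mono k c X) :
    ∃ c : G κ → Fin (2 * n), ¬ ∃ X : Set (G κ), X.Infinite ∧ Mono k c X := by
  classical
  have h1κ : (1 : Cardinal) < κ := one_lt_aleph0.trans_le hκ
  rcases Nat.eq_zero_or_pos n with hn0 | hn0
  · exfalso
    obtain ⟨c1, -⟩ := hn 1 le_rfl h1κ
    subst hn0
    exact (c1 0).elim0
  choose cfam hcfam using hn
  -- totalised family of colourings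
  set cf : ∀ lam : Cardinal, G lam → Fin n := fun lam =>
    if h : 1 ≤ lam ∧ lam < κ then cfam lam h.1 h.2 else fun _ => ⟨0, hn0⟩ with hcf_def
  have hcf : ∀ lam : Cardinal, 1 ≤ lam → lam < κ →
      ¬ ∃ X : Set (G lam), X.Infinite ∧ Mono k (cf lam) X := by
    intro lam h1 h2
    simp only [hcf_def, dif_pos (And.intro h1 h2)]
    exact hcfam lam h1 h2
  -- a well-order of the index set of type `κ.ord`
  have hmkT : #(κ.ord.ToType) = #(κ.out) := by
    rw [Cardinal.mk_toType, Cardinal.card_ord, Cardinal.mk_out]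
  obtain ⟨e⟩ : Nonempty (κ.out ≃ κ.ord.ToType) := Cardinal.eq.1 hmkT.symm
  haveI hTne : Nonempty κ.ord.ToType :=
    Ordinal.toType_nonempty_iff_ne_zero.2 (Cardinal.isSuccLimit_ord hκ).pos.ne'
  -- the top of a nonzero element
  set topf : G κ → κ.ord.ToType := fun x =>
    if h : ((Finsupp.support x).image (fun a => e a)).Nonempty
    then ((Finsupp.support x).image (fun a => e a)).max' h
    else Classical.arbitrary _ with htopf_def
  -- the colouring
  set pair : Fin n → Fin 2 → Fin (2 * n) := fun a b => finProdFinEquiv (b, a) with hpair_def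
  have pair_inj : ∀ a a' b b', pair a b = pair a' b' → a = a' ∧ b = b' := by
    intro a a' b b' h
    rw [hpair_def] at h
    have := finProdFinEquiv.injective h
    exact ⟨congrArg Prod.snd this, congrArg Prod.fst this⟩
  set c : G κ → Fin (2 * n) := fun x =>
    if hx : x = 0 then pair ⟨0, hn0⟩ 0
    else pair (cf (lamA e (topf x)) (psiA e (topf x) x))
      (qbit k (x (e.symm (topf x)))) with hc_def
  refine ⟨c, ?_⟩
  rintro ⟨X, hXinf, i, hmono⟩
  -- the key computation lemma for the colouring
  have L1 : ∀ (z : G κ) (α : κ.ord.ToType), (∀ a ∈ Finsupp.support z, e a ≤ α) →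
      z (e.symm α) ≠ 0 →
      c z = pair (cf (lamA e α) (psiA e α z)) (qbit k (z (e.symm α))) := by
    intro z α hsub hcoeff
    have hz : z ≠ 0 := by
      intro h
      rw [h] at hcoeff
      exact hcoeff rfl
    have hmem : α ∈ (Finsupp.support z).image (fun a => e a) :=
      Finset.mem_image.2 ⟨e.symm α, Finsupp.mem_support_iff.2 hcoeff, by simp⟩
    have himg : ((Finsupp.support z).image (fun a => e a)).Nonempty := ⟨α, hmem⟩
    have htop : topf z = α := by
      simp only [htopf_def, dif_pos himg]
      refine le_antisymm (Finset.max'_le _ _ _ ?_) (Finset.le_max' _ _ hmem)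
      intro b hb
      obtain ⟨a, ha, rfl⟩ := Finset.mem_image.1 hb
      exact hsub a ha
    subst htop
    simp only [hc_def, dif_neg hz]
  -- throw away 0
  set X₀ : Set (G κ) := X \ {0} with hX₀_def
  have hX₀inf : X₀.Infinite := hXinf.diff (Set.finite_singleton 0)
  have hX₀sub : X₀ ⊆ X := Set.diff_subset
  have hX₀ne : ∀ x ∈ X₀, x ≠ 0 := fun x hx => hx.2
  -- basic facts about tops
  have htop_le : ∀ x : G κ, x ≠ 0 → ∀ a ∈ Finsupp.support x, e a ≤ topf x := by
    intro x hx a ha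
    have himg : ((Finsupp.support x).image (fun a => e a)).Nonempty :=
      ⟨e a, Finset.mem_image_of_mem _ ha⟩
    simp only [htopf_def, dif_pos himg]
    exact Finset.le_max' _ _ (Finset.mem_image_of_mem _ ha)
  have hcoeff_ne : ∀ x : G κ, x ≠ 0 → x (e.symm (topf x)) ≠ 0 := by
    intro x hx
    have himg : ((Finsupp.support x).image (fun a => e a)).Nonempty := by
      rw [Finset.image_nonempty]
      exact Finsupp.support_nonempty_iff.2 hx
    have hmem : topf x ∈ (Finsupp.support x).image (fun a => e a) := by
      simp only [htopf_def, dif_pos himg]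
      exact Finset.max'_mem _ _
    obtain ⟨a, ha, hea⟩ := Finset.mem_image.1 hmem
    have hsy : e.symm (topf x) = a := by rw [← hea]; simp
    rw [hsy]
    exact Finsupp.mem_support_iff.1 ha
  -- coefficients of `k • x` and of finite sums
  have hsmul_apply : ∀ (x : G κ) (a : κ.out), (k • x) a = (k : ℚ) * x a := by
    intro x a
    calc (k • x) a = evalH a (k • x) := rfl
      _ = k • (evalH a x) := map_nsmul (evalH a) k x
      _ = (k : ℚ) * x a := by rw [evalH_apply, nsmul_eq_mul]
  have hsum_apply : ∀ (F : Finset (G κ)) (a : κ.out),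
      (∑ x ∈ F, x) a = ∑ x ∈ F, x a := by
    intro F a
    calc (∑ x ∈ F, x) a = evalH a (∑ x ∈ F, x) := rfl
      _ = ∑ x ∈ F, evalH a x := map_sum (evalH a) _ F
      _ = ∑ x ∈ F, x a := rfl
  have hsmul_supp : ∀ (x : G κ) (a : κ.out), a ∈ Finsupp.support (k • x) →
      a ∈ Finsupp.support x := by
    intro x a ha
    have ha' := Finsupp.mem_support_iff.1 ha
    refine Finsupp.mem_support_iff.2 ?_
    intro h
    erw [hsmul_apply x a, h, mul_zero] at ha'
    exact ha' rfl
  have hk0Q : (k : ℚ) ≠ 0 := by positivity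
  -- dichotomy on the set of tops
  by_cases hBig : ∃ Fk : Finset κ.ord.ToType, ↑Fk ⊆ topf '' X₀ ∧ Fk.card = k
  · -- Case B : there are k distinct tops
    obtain ⟨Fk, hFksub, hFkcard⟩ := hBig
    have hFkne : Fk.Nonempty := Finset.card_pos.1 (by omega)
    set αm := Fk.max' hFkne with hαm_def
    have hpick : ∀ β ∈ Fk, ∃ x ∈ X₀, topf x = β := by
      intro β hβ
      obtain ⟨x, hx, hxβ⟩ := hFksub hβ
      exact ⟨x, hx, hxβ⟩
    choose pick hpickX hpicktop using hpick
    set F : Finset (G κ) := Fk.attach.image (fun β => pick β.1 β.2) with hF_def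
    have hpick_inj : ∀ (β₁ : {x // x ∈ Fk}) (β₂ : {x // x ∈ Fk}),
        pick β₁.1 β₁.2 = pick β₂.1 β₂.2 → β₁ = β₂ := by
      intro β₁ β₂ h
      have : β₁.1 = β₂.1 := by
        rw [← hpicktop β₁.1 β₁.2, ← hpicktop β₂.1 β₂.2, h]
      exact Subtype.ext this
    have hFcard : F.card = k := by
      rw [hF_def, Finset.card_image_of_injective _ (fun β₁ β₂ h => hpick_inj β₁ β₂ h),
        Finset.card_attach, hFkcard]
    have hFsub : ↑F ⊆ X := by
      intro x hx
      rw [hF_def] at hx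
      simp only [Finset.coe_image, Set.mem_image] at hx
      obtain ⟨β, _, rfl⟩ := hx
      exact hX₀sub (hpickX β.1 β.2)
    set z : G κ := ∑ x ∈ F, x with hz_def
    set xm : G κ := pick αm (Finset.max'_mem _ _) with hxm_def
    have hxmX₀ : xm ∈ X₀ := hpickX _ _
    have hxm0 : xm ≠ 0 := hX₀ne _ hxmX₀
    have hxmtop : topf xm = αm := hpicktop _ _
    have hzsub : ∀ a ∈ Finsupp.support z, e a ≤ αm := by
      intro a ha
      have ha' := Finsupp.mem_support_iff.1 ha
      by_contra hgt
      apply ha'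
      erw [hz_def, hsum_apply]
      apply Finset.sum_eq_zero
      intro x hx
      rw [hF_def] at hx
      simp only [Finset.mem_image, Finset.mem_attach, true_and] at hx
      obtain ⟨β, rfl⟩ := hx
      by_contra hne
      have hmem : a ∈ Finsupp.support (pick β.1 β.2) := Finsupp.mem_support_iff.2 hne
      have hle := htop_le _ (hX₀ne _ (hpickX β.1 β.2)) a hmem
      rw [hpicktop β.1 β.2] at hle
      exact hgt (le_trans hle (Finset.le_max' _ _ β.2))
    have hzcoeff : z (e.symm αm) = xm (e.symm αm) := by
      rw [hz_def, hsum_apply, hF_def,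
        Finset.sum_image (fun β₁ h₁ β₂ h₂ h => hpick_inj β₁ β₂ h),
        Finset.sum_eq_single_of_mem (⟨αm, Finset.max'_mem _ _⟩ : {x // x ∈ Fk})
          (Finset.mem_attach _ _)]
      intro β hβ hne
      by_contra hne0
      have hmem : e.symm αm ∈ Finsupp.support (pick β.1 β.2) :=
        Finsupp.mem_support_iff.2 hne0
      have hle := htop_le _ (hX₀ne _ (hpickX β.1 β.2)) _ hmem
      rw [hpicktop β.1 β.2] at hle
      simp only [Equiv.apply_symm_apply] at hle
      have hβlt : β.1 < αm := lt_of_le_of_ne (Finset.le_max' _ _ β.2)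
        (fun h => hne (Subtype.ext h))
      exact absurd hle (not_le.2 hβlt)
    have hzcoeff_ne : z (e.symm αm) ≠ 0 := by
      rw [hzcoeff, ← hxmtop]
      exact hcoeff_ne xm hxm0
    have hcz := L1 z αm hzsub hzcoeff_ne
    have hkxmsub : ∀ a ∈ Finsupp.support (k • xm), e a ≤ αm := by
      intro a ha
      have := htop_le xm hxm0 a (hsmul_supp xm a ha)
      rwa [hxmtop] at this
    have hkxmcoeff : (k • xm) (e.symm αm) ≠ 0 := by
      rw [hsmul_apply]
      refine mul_ne_zero hk0Q ?_
      rw [← hxmtop]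
      exact hcoeff_ne xm hxm0
    have hckxm := L1 (k • xm) αm hkxmsub hkxmcoeff
    have hzmem : z ∈ FS k X ∪ (fun x => k • x) '' X :=
      Or.inl ⟨F, hFsub, hFcard, hz_def⟩
    have hkxmmem : (k • xm) ∈ FS k X ∪ (fun x => k • x) '' X :=
      Or.inr ⟨xm, hX₀sub hxmX₀, rfl⟩
    have h1 := hmono z hzmem
    have h2 := hmono _ hkxmmem
    rw [hcz] at h1
    rw [hckxm] at h2
    have hbits := (pair_inj _ _ _ _ (h1.trans h2.symm)).2
    rw [hzcoeff] at hbits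
    rw [hsmul_apply] at hbits
    exact qbit_k_mul k hk _ (by rw [← hxmtop]; exact hcoeff_ne xm hxm0) hbits.symm
  · -- Case A : fewer than k tops, so some fiber is infinite
    have htfin : (topf '' X₀).Finite := by
      by_contra hinf
      obtain ⟨Fk, hsub, hcard⟩ := Set.Infinite.exists_subset_card_eq hinf k
      exact hBig ⟨Fk, hsub, hcard⟩
    have hfiber : ∃ α, {x ∈ X₀ | topf x = α}.Infinite := by
      by_contra hfin
      push_neg at hfin
      apply hX₀inf
      have hsub : X₀ ⊆ ⋃ α ∈ topf '' X₀, {x ∈ X₀ | topf x = α} := by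
        intro x hx
        exact Set.mem_biUnion (Set.mem_image_of_mem _ hx) ⟨hx, rfl⟩
      exact Set.Finite.subset (Set.Finite.biUnion htfin (fun α _ => hfin α)) hsub
    obtain ⟨α, hXαinf⟩ := hfiber
    set Xα : Set (G κ) := {x ∈ X₀ | topf x = α} with hXα_def
    have hXαne : ∀ x ∈ Xα, x ≠ 0 := fun x hx => hX₀ne x hx.1
    have hXαcoeff : ∀ x ∈ Xα, x (e.symm α) ≠ 0 := by
      intro x hx
      rw [← hx.2]
      exact hcoeff_ne x (hXαne x hx)
    have hXαsub : ∀ x ∈ Xα, ∀ a ∈ Finsupp.support x, e a ≤ α := by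
      intro x hx a ha
      rw [← hx.2]
      exact htop_le x (hXαne x hx) a ha
    -- split by sign of the leading coefficient
    have hsplit : {x ∈ Xα | 0 < x (e.symm α)}.Infinite ∨
        {x ∈ Xα | x (e.symm α) < 0}.Infinite := by
      by_contra hcon
      push_neg at hcon
      apply hXαinf
      have hsub : Xα ⊆ {x ∈ Xα | 0 < x (e.symm α)} ∪ {x ∈ Xα | x (e.symm α) < 0} := by
        intro x hx
        rcases lt_or_gt_of_ne (hXαcoeff x hx) with h | h
        · exact Or.inr ⟨hx, h⟩
        · exact Or.inl ⟨hx, h⟩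
      exact Set.Finite.subset (hcon.1.union hcon.2) hsub
    obtain ⟨Y, hYinf, hYXα, hYsign⟩ :
        ∃ Y : Set (G κ), Y.Infinite ∧ Y ⊆ Xα ∧
          ((∀ x ∈ Y, 0 < x (e.symm α)) ∨ (∀ x ∈ Y, x (e.symm α) < 0)) := by
      rcases hsplit with h | h
      · exact ⟨_, h, fun x hx => hx.1, Or.inl (fun x hx => hx.2)⟩
      · exact ⟨_, h, fun x hx => hx.1, Or.inr (fun x hx => hx.2)⟩
    have hsumne : ∀ F : Finset (G κ), ↑F ⊆ Y → F.Nonempty →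
        (∑ x ∈ F, x (e.symm α)) ≠ 0 := by
      intro F hFY hFne
      rcases hYsign with h | h
      · exact (Finset.sum_pos (fun x hx => h x (hFY hx)) hFne).ne'
      · have h2 : (0:ℚ) < ∑ x ∈ F, -(x (e.symm α)) :=
          Finset.sum_pos (fun x hx => neg_pos.2 (h x (hFY hx))) hFne
        rw [Finset.sum_neg_distrib] at h2
        exact (neg_pos.1 h2).ne
    -- the image of Y in G (lamA e α)
    set W : Set (G (lamA e α)) := psiA e α '' Y with hW_def
    have hWinf : W.Infinite := by
      apply Set.Infinite.image _ hYinf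
      intro x hx y hy h
      exact psiA_injOn e α x y (hXαsub x (hYXα hx)) (hXαsub y (hYXα hy)) h
    set i1 : Fin n := (finProdFinEquiv.symm i).2 with hi1_def
    have hpair_i : ∀ a b, pair a b = i → a = i1 := by
      intro a b h
      rw [hpair_def] at h
      have := congrArg (fun x => (finProdFinEquiv.symm x).2) h
      simpa [hi1_def] using this
    apply hcf (lamA e α) (one_le_lamA e α) (lamA_lt hκ e α)
    refine ⟨W, hWinf, i1, ?_⟩
    intro y hy
    rcases hy with hy | hy
    · -- y is a sum of k distinct elements of W
      obtain ⟨F', hF'W, hF'card, rfl⟩ := hy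
      have hpick2 : ∀ w ∈ F', ∃ x ∈ Y, psiA e α x = w := fun w hw => hF'W hw
      choose pick2 hpick2Y hpick2psi using hpick2
      have hpick2_inj : ∀ (w₁ : {x // x ∈ F'}) (w₂ : {x // x ∈ F'}),
          pick2 w₁.1 w₁.2 = pick2 w₂.1 w₂.2 → w₁ = w₂ := by
        intro w₁ w₂ h
        have : w₁.1 = w₂.1 := by
          rw [← hpick2psi w₁.1 w₁.2, ← hpick2psi w₂.1 w₂.2, h]
        exact Subtype.ext this
      set F : Finset (G κ) := F'.attach.image (fun w => pick2 w.1 w.2) with hF_def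
      have hFcard : F.card = k := by
        rw [hF_def, Finset.card_image_of_injective _ (fun w₁ w₂ h => hpick2_inj w₁ w₂ h),
          Finset.card_attach, hF'card]
      have hFY : ↑F ⊆ Y := by
        intro x hx
        rw [hF_def] at hx
        simp only [Finset.coe_image, Set.mem_image] at hx
        obtain ⟨w, _, rfl⟩ := hx
        exact hpick2Y w.1 w.2
      have hFX : ↑F ⊆ X := fun x hx => hX₀sub (hYXα (hFY hx)).1
      set z : G κ := ∑ x ∈ F, x with hz_def
      have hFne : F.Nonempty := Finset.card_pos.1 (by omega)
      have hzsub : ∀ a ∈ Finsupp.support z, e a ≤ α := by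
        intro a ha
        have ha' := Finsupp.mem_support_iff.1 ha
        by_contra hgt
        apply ha'
        erw [hz_def, hsum_apply]
        apply Finset.sum_eq_zero
        intro x hx
        by_contra hne
        exact hgt (hXαsub x (hYXα (hFY hx)) a (Finsupp.mem_support_iff.2 hne))
      have hzcoeff_ne : z (e.symm α) ≠ 0 := by
        rw [hz_def, hsum_apply]
        exact hsumne F hFY hFne
      have hpsiz : psiA e α z = ∑ w ∈ F', w := by
        have h1 : psiA e α z = ∑ x ∈ F, psiA e α x := by
          rw [hz_def]
          exact map_sum (psiH e α) _ F
        rw [h1, hF_def, Finset.sum_image (fun w₁ h₁ w₂ h₂ h => hpick2_inj w₁ w₂ h),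
          ← Finset.sum_attach F' (fun w => w)]
        exact Finset.sum_congr rfl (fun w _ => hpick2psi w.1 w.2)
      have hzmem : z ∈ FS k X ∪ (fun x => k • x) '' X :=
        Or.inl ⟨F, hFX, hFcard, hz_def⟩
      have h1 := hmono z hzmem
      rw [L1 z α hzsub hzcoeff_ne] at h1
      have h2 := hpair_i _ _ h1
      rwa [hpsiz] at h2
    · -- y = k • w for some w ∈ W
      obtain ⟨w, hwW, rfl⟩ := hy
      obtain ⟨x, hxY, rfl⟩ := hwW
      have hx0 : x ≠ 0 := hXαne x (hYXα hxY)
      have hkxsub : ∀ a ∈ Finsupp.support (k • x), e a ≤ α :=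
        fun a ha => hXαsub x (hYXα hxY) a (hsmul_supp x a ha)
      have hkxcoeff : (k • x) (e.symm α) ≠ 0 := by
        rw [hsmul_apply]
        exact mul_ne_zero hk0Q (hXαcoeff x (hYXα hxY))
      have hkxmem : (k • x) ∈ FS k X ∪ (fun x => k • x) '' X :=
        Or.inr ⟨x, hX₀sub (hYXα hxY).1, rfl⟩
      have h1 := hmono _ hkxmem
      rw [L1 (k • x) α hkxsub hkxcoeff] at h1
      have h2 := hpair_i _ _ h1
      rwa [psiA_nsmul e α k x] at h2
end

section
/- Let k ≥ 2 and suppose ℝ is countably coloured so that every colour class is Lebesgue measurable. Then there exists H ⊆ ℝ with |H| = 2^{ℵ₀} such that kH is monochromatic. -/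
open Cardinal MeasureTheory Set Filter Metric Topology
open scoped ENNReal

/-- `kH`: sums of `k` elements of `H`, repetitions allowed. -/
def kTimes (k : ℕ) (H : Set ℝ) : Set ℝ :=
  {y | ∃ f : Fin k → ℝ, (∀ i, f i ∈ H) ∧ y = ∑ i, f i}
lemma keyP {k : ℕ} (hk : 1 ≤ k) {K B : Set ℝ} (hKm : MeasurableSet K)
    (hBK : B ⊆ K) (hnull : volume (K \ B) = 0)
    (hdens : ∀ x ∈ B, Tendsto (fun r => volume (K ∩ closedBall x r) / volume (closedBall x r))
      (𝓝[>] (0:ℝ)) (𝓝 1))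
    (S : Finset ℝ) (hS : ↑S ⊆ B) {ε : ℝ} (hε : 0 < ε) :
    ∃ δ : ℝ, 0 < δ ∧ δ < ε ∧ ∀ s ∈ S, ∀ j : ℕ, j ≤ k → s + j * δ ∈ B := by
  have hk0 : (0:ℝ) < k := by exact_mod_cast hk
  obtain ⟨η, hη0, hη1, hηsmall⟩ :
      ∃ η : ℝ, 0 < η ∧ η < 1 ∧ (S.card:ℝ) * ((k:ℝ) * (2 * η)) < 1/(k:ℝ) := by
    have hc0 : (0:ℝ) ≤ (S.card:ℝ) := Nat.cast_nonneg _
    have hk1 : (1:ℝ) ≤ k := by exact_mod_cast hk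
    refine ⟨1 / (4 * (k:ℝ)^2 * ((S.card:ℝ)+1)), by positivity, ?_, ?_⟩
    · rw [div_lt_one (by positivity)]
      nlinarith [hk1, hc0]
    · have h1 : (S.card:ℝ) * ((k:ℝ)*(2*(1/(4*(k:ℝ)^2*((S.card:ℝ)+1)))))
          = (S.card:ℝ)/(2*(k:ℝ)*((S.card:ℝ)+1)) := by
        field_simp
        ring
      rw [h1, div_lt_div_iff₀ (by positivity) hk0]
      nlinarith [hk0, hc0]
  -- find a good radius r
  have hev : ∀ᶠ r in 𝓝[>] (0:ℝ),
      (∀ s ∈ S, ENNReal.ofReal ((1-η)*(2*r)) ≤ volume (K ∩ closedBall s r))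
        ∧ r < k * ε ∧ 0 < r := by
    have h1 : ∀ᶠ r in 𝓝[>] (0:ℝ),
        ∀ s ∈ S, ENNReal.ofReal ((1-η)*(2*r)) ≤ volume (K ∩ closedBall s r) := by
      rw [Finset.eventually_all]
      intro s hs
      have hd := hdens s (hS hs)
      have hlt : ENNReal.ofReal (1-η) < 1 := by
        rw [← ENNReal.ofReal_one]
        exact ENNReal.ofReal_lt_ofReal_iff_of_nonneg (by linarith) |>.mpr (by linarith)
      filter_upwards [hd.eventually (lt_mem_nhds hlt), self_mem_nhdsWithin] with r hr hr0
      rw [mem_Ioi] at hr0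
      have hcb : volume (closedBall s r) = ENNReal.ofReal (2*r) := Real.volume_closedBall s r
      have hne0 : volume (closedBall s r) ≠ 0 := by
        rw [hcb]; simp [ENNReal.ofReal_eq_zero]; linarith
      have hnetop : volume (closedBall s r) ≠ ⊤ := by rw [hcb]; exact ENNReal.ofReal_ne_top
      have := (ENNReal.lt_div_iff_mul_lt (Or.inl hne0) (Or.inl hnetop)).mp hr
      rw [hcb] at this
      calc ENNReal.ofReal ((1-η)*(2*r)) = ENNReal.ofReal (1-η) * ENNReal.ofReal (2*r) :=
            ENNReal.ofReal_mul (by linarith)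
        _ ≤ volume (K ∩ closedBall s r) := this.le
    have h2 : ∀ᶠ r in 𝓝[>] (0:ℝ), r < k * ε := by
      apply eventually_nhdsWithin_of_eventually_nhds
      exact Filter.Tendsto.eventually_lt_const (by positivity) tendsto_id
    have h3 : ∀ᶠ r in 𝓝[>] (0:ℝ), (0:ℝ) < r := self_mem_nhdsWithin
    filter_upwards [h1, h2, h3] with r a b c using ⟨a, b, c⟩
  obtain ⟨r, hrS, hrε, hr0⟩ := hev.exists
  set ε' : ℝ := r / k with hε'def
  have hε'0 : 0 < ε' := by positivity
  have hε'ε : ε' < ε := by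
    rw [hε'def, div_lt_iff₀ hk0]
    calc r < k * ε := hrε
    _ = ε * k := mul_comm _ _
  -- bad sets
  set W : ℝ → Set ℝ := fun s => (closedBall s r \ K) ∪ toMeasurable volume (K \ B) with hW
  have hvolW : ∀ s ∈ S, volume (W s) ≤ ENNReal.ofReal (2*η*r) := by
    intro s hs
    have hKcb_fin : volume (K ∩ closedBall s r) ≠ ⊤ := by
      refine ne_top_of_le_ne_top ?_ (measure_mono inter_subset_right)
      rw [Real.volume_closedBall]; exact ENNReal.ofReal_ne_top
    have hdiff : closedBall s r \ K = closedBall s r \ (K ∩ closedBall s r) := by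
      ext x; simp only [mem_diff, mem_inter_iff]; tauto
    have h1 : volume (closedBall s r \ K) ≤ ENNReal.ofReal (2*η*r) := by
      rw [hdiff, measure_diff inter_subset_right
        (hKm.inter measurableSet_closedBall).nullMeasurableSet hKcb_fin,
        Real.volume_closedBall]
      have h2 : ENNReal.ofReal ((1-η)*(2*r)) ≤ volume (K ∩ closedBall s r) := hrS s hs
      have h3 : ENNReal.ofReal (2*r) - volume (K ∩ closedBall s r)
          ≤ ENNReal.ofReal (2*r) - ENNReal.ofReal ((1-η)*(2*r)) := tsub_le_tsub_left h2 _
      refine h3.trans (le_of_eq ?_)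
      rw [← ENNReal.ofReal_sub _ (by nlinarith)]
      ring_nf
    calc volume (W s) ≤ volume (closedBall s r \ K) + volume (toMeasurable volume (K \ B)) :=
          measure_union_le _ _
      _ ≤ ENNReal.ofReal (2*η*r) + 0 := by
          rw [measure_toMeasurable, hnull]; exact add_le_add h1 le_rfl
      _ = ENNReal.ofReal (2*η*r) := add_zero _
  set bad : ℝ → ℕ → Set ℝ := fun s j => {d : ℝ | d ∈ Ioo (0:ℝ) ε' ∧ s + j * d ∉ B} with hbad
  have hbadsub : ∀ s ∈ S, ∀ j : ℕ, 1 ≤ j → j ≤ k →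
      bad s j ⊆ (fun d => (j:ℝ) * d) ⁻¹' ((fun y => s + y) ⁻¹' (W s)) := by
    rintro s hs j hj1 hjk d ⟨⟨hd0, hdε'⟩, hdB⟩
    simp only [mem_preimage]
    have hj0 : (0:ℝ) < j := by exact_mod_cast hj1
    have hjd : 0 < (j:ℝ) * d := by positivity
    have hjdr : (j:ℝ) * d ≤ r := by
      have : (j:ℝ) ≤ k := by exact_mod_cast hjk
      calc (j:ℝ) * d ≤ k * d := by nlinarith
        _ ≤ k * ε' := by nlinarith
        _ = r := by rw [hε'def]; field_simp
    have hcb : s + (j:ℝ)*d ∈ closedBall s r := by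
      rw [mem_closedBall, Real.dist_eq]
      rw [abs_of_nonneg (by linarith)]
      linarith
    by_cases hK : s + (j:ℝ)*d ∈ K
    · exact Or.inr (subset_toMeasurable _ _ ⟨hK, hdB⟩)
    · exact Or.inl ⟨hcb, hK⟩
  have hbadvol : ∀ s ∈ S, ∀ j : ℕ, 1 ≤ j → j ≤ k →
      volume (bad s j) ≤ ENNReal.ofReal (2*η*r) := by
    intro s hs j hj1 hjk
    have hj0 : (j:ℝ) ≠ 0 := by positivity
    calc volume (bad s j) ≤ volume ((fun d => (j:ℝ) * d) ⁻¹' ((fun y => s + y) ⁻¹' (W s))) :=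
          measure_mono (hbadsub s hs j hj1 hjk)
      _ = ENNReal.ofReal |(j:ℝ)⁻¹| * volume ((fun y => s + y) ⁻¹' (W s)) :=
          Real.volume_preimage_mul_left hj0 _
      _ = ENNReal.ofReal |(j:ℝ)⁻¹| * volume (W s) := by rw [measure_preimage_add]
      _ ≤ 1 * ENNReal.ofReal (2*η*r) := by
          apply mul_le_mul' _ (hvolW s hs)
          rw [← ENNReal.ofReal_one]
          apply ENNReal.ofReal_le_ofReal
          rw [abs_of_nonneg (by positivity)]
          rw [inv_le_one_iff₀]
          right; exact_mod_cast hj1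
      _ = ENNReal.ofReal (2*η*r) := one_mul _
  set U : Set ℝ := ⋃ s ∈ S, ⋃ j ∈ Finset.Icc 1 k, bad s j with hU
  have hvolU : volume U < ENNReal.ofReal ε' := by
    have h1 : volume U ≤ ∑ s ∈ S, ∑ j ∈ Finset.Icc 1 k, volume (bad s j) := by
      refine le_trans (measure_biUnion_finset_le _ _) ?_
      exact Finset.sum_le_sum fun s hs => measure_biUnion_finset_le _ _
    have h2 : ∑ s ∈ S, ∑ j ∈ Finset.Icc 1 k, volume (bad s j)
        ≤ (S.card : ℝ≥0∞) * ((k:ℝ≥0∞) * ENNReal.ofReal (2*η*r)) := by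
      calc ∑ s ∈ S, ∑ j ∈ Finset.Icc 1 k, volume (bad s j)
          ≤ ∑ s ∈ S, ((k:ℝ≥0∞) * ENNReal.ofReal (2*η*r)) := by
            apply Finset.sum_le_sum
            intro s hs
            calc ∑ j ∈ Finset.Icc 1 k, volume (bad s j)
                ≤ ∑ j ∈ Finset.Icc 1 k, ENNReal.ofReal (2*η*r) := by
                  apply Finset.sum_le_sum
                  intro j hj
                  rw [Finset.mem_Icc] at hj
                  exact hbadvol s hs j hj.1 hj.2
              _ = (Finset.Icc 1 k).card • ENNReal.ofReal (2*η*r) := Finset.sum_const _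
              _ ≤ (k:ℝ≥0∞) * ENNReal.ofReal (2*η*r) := by
                  rw [Nat.card_Icc]; simp [nsmul_eq_mul]
        _ = (S.card : ℝ≥0∞) * ((k:ℝ≥0∞) * ENNReal.ofReal (2*η*r)) := by
            rw [Finset.sum_const, nsmul_eq_mul]
    have h3 : (S.card : ℝ≥0∞) * ((k:ℝ≥0∞) * ENNReal.ofReal (2*η*r))
        < ENNReal.ofReal ε' := by
      rw [show ((S.card:ℝ≥0∞)) = ENNReal.ofReal (S.card:ℝ) by simp,
        show ((k:ℝ≥0∞)) = ENNReal.ofReal (k:ℝ) by simp,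
        ← ENNReal.ofReal_mul (by positivity), ← ENNReal.ofReal_mul (Nat.cast_nonneg _)]
      rw [ENNReal.ofReal_lt_ofReal_iff hε'0, hε'def]
      have h4 : ((S.card:ℝ) * ((k:ℝ) * (2 * η))) * r < (1/(k:ℝ)) * r :=
        mul_lt_mul_of_pos_right hηsmall hr0
      have h5 : ((S.card:ℝ) * ((k:ℝ) * (2 * η))) * r = (S.card:ℝ) * ((k:ℝ) * (2*η*r)) := by ring
      have h6 : (1/(k:ℝ)) * r = r / (k:ℝ) := by ring
      rw [h5, h6] at h4
      exact h4
    exact lt_of_le_of_lt (le_trans h1 h2) h3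
  have hex : ∃ δ ∈ Ioo (0:ℝ) ε', δ ∉ U := by
    by_contra h
    push_neg at h
    have hsub : Ioo (0:ℝ) ε' ⊆ U := fun d hd => h d hd
    have hm : volume (Ioo (0:ℝ) ε') ≤ volume U := measure_mono hsub
    rw [Real.volume_Ioo, sub_zero] at hm
    exact absurd (lt_of_le_of_lt hm hvolU) (lt_irrefl _)
  obtain ⟨δ, ⟨hδ0, hδε'⟩, hδU⟩ := hex
  refine ⟨δ, hδ0, lt_trans hδε' hε'ε, fun s hs j hjk => ?_⟩
  rcases Nat.eq_zero_or_pos j with hj | hj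
  · subst hj; simpa using hS hs
  · by_contra hB
    exact hδU (mem_biUnion hs (mem_biUnion (Finset.mem_Icc.mpr ⟨hj, hjk⟩)
      ⟨⟨hδ0, hδε'⟩, hB⟩))
noncomputable def fuseSeq (next : (ℕ → ℝ) → ℕ → ℝ) : ℕ → ℕ → ℝ
  | 0 => fun _ => 0
  | n+1 => Function.update (fuseSeq next n) n (next (fuseSeq next n) n)

lemma fusion {k : ℕ} {B : Set ℝ} {b : ℝ} (hb : b ∈ B)
    (hP : ∀ S : Finset ℝ, ↑S ⊆ B → ∀ ε : ℝ, 0 < ε →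
      ∃ δ : ℝ, 0 < δ ∧ δ < ε ∧ ∀ s ∈ S, ∀ j : ℕ, j ≤ k → s + j * δ ∈ B) :
    ∃ δ : ℕ → ℝ, (∀ i, 0 < δ i) ∧ δ 0 ≤ 1 ∧ (∀ i, δ (i+1) ≤ δ i / 4) ∧
      ∀ n : ℕ, ∀ m : ℕ → ℕ, (∀ i, m i ≤ k) →
        b + ∑ i ∈ Finset.range n, (m i : ℝ) * δ i ∈ B := by
  classical
  -- invariant
  set Inv : ℕ → (ℕ → ℝ) → Prop := fun n f =>
    (∀ i, i < n → 0 < f i) ∧ (0 < n → f 0 ≤ 1) ∧ (∀ i, i+1 < n → f (i+1) ≤ f i / 4) ∧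
    (∀ m : ℕ → ℕ, (∀ i, m i ≤ k) → b + ∑ i ∈ Finset.range n, (m i : ℝ) * f i ∈ B)
    with hInv
  set Q : (ℕ → ℝ) → ℕ → ℝ → Prop := fun f n d =>
    0 < d ∧ d < (if n = 0 then 1 else f (n-1) / 4) ∧
    (∀ m : ℕ → ℕ, (∀ i, m i ≤ k) →
      b + ∑ i ∈ Finset.range (n+1), (m i : ℝ) * (Function.update f n d) i ∈ B) with hQ
  -- the step existence
  have hstep : ∀ n f, Inv n f → ∃ d, Q f n d := by
    intro n f hf
    obtain ⟨hf1, hf2, hf3, hf4⟩ := hf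
    set S : Finset ℝ := Finset.image
      (fun m : Fin n → Fin (k+1) => b + ∑ i ∈ Finset.range n,
        ((if h : i < n then ((m ⟨i, h⟩ : ℕ)) else 0 : ℕ) : ℝ) * f i) Finset.univ with hSdef
    have hSB : ↑S ⊆ B := by
      intro x hx
      simp only [hSdef, Finset.coe_image, mem_image] at hx
      obtain ⟨m, _, rfl⟩ := hx
      exact hf4 _ (fun i => by
        by_cases h : i < n
        · simp only [h, dif_pos]
          exact Nat.lt_succ_iff.mp (m ⟨i, h⟩).2
        · simp [h])
    have hε : (0:ℝ) < (if n = 0 then 1 else f (n-1) / 4) := by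
      split
      · norm_num
      · next h => exact div_pos (hf1 _ (Nat.sub_lt (Nat.pos_of_ne_zero h) one_pos)) (by norm_num)
    obtain ⟨d, hd0, hdε, hdB⟩ := hP S hSB _ hε
    refine ⟨d, hd0, hdε, ?_⟩
    intro m hm
    have hsum : ∑ i ∈ Finset.range (n+1), (m i : ℝ) * (Function.update f n d) i
        = (∑ i ∈ Finset.range n, (m i : ℝ) * f i) + (m n : ℝ) * d := by
      rw [Finset.sum_range_succ, Function.update_self]
      congr 1
      apply Finset.sum_congr rfl
      intro i hi
      rw [Finset.mem_range] at hi
      rw [Function.update_of_ne (Nat.ne_of_lt hi)]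
    rw [hsum, ← add_assoc]
    have hmem : b + ∑ i ∈ Finset.range n, (m i : ℝ) * f i ∈ S := by
      simp only [hSdef, Finset.mem_image]
      refine ⟨fun i => ⟨m i, Nat.lt_succ_of_le (hm i)⟩, Finset.mem_univ _, ?_⟩
      congr 1
      apply Finset.sum_congr rfl
      intro i hi
      rw [Finset.mem_range] at hi
      simp [hi]
    exact hdB _ hmem (m n) (hm n)
  -- the recursively defined sequence
  set next : (ℕ → ℝ) → ℕ → ℝ := fun f n =>
    if h : ∃ d, Q f n d then h.choose else 1 with hnext
  set g : ℕ → ℕ → ℝ := fuseSeq next with hg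
  have hg0 : g 0 = fun _ => 0 := rfl
  have hgsucc : ∀ n, g (n+1) = Function.update (g n) n (next (g n) n) := fun n => rfl
  -- invariant holds along the sequence
  have hInvAll : ∀ n, Inv n (g n) := by
    intro n
    induction n with
    | zero =>
      refine ⟨fun i hi => absurd hi (Nat.not_lt_zero _), fun h => absurd h (lt_irrefl _), 
        fun i hi => absurd hi (Nat.not_lt_zero _), fun m hm => by simpa using hb⟩
    | succ n ih =>
      have hex : ∃ d, Q (g n) n d := hstep n (g n) ih
      have hQd : Q (g n) n (next (g n) n) := by
        rw [hnext]
        simp only [hex, dif_pos]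
        exact hex.choose_spec
      obtain ⟨hd0, hdε, hdB⟩ := hQd
      obtain ⟨ih1, ih2, ih3, ih4⟩ := ih
      rw [hgsucc n]
      refine ⟨?_, ?_, ?_, hdB⟩
      · intro i hi
        rcases Nat.lt_succ_iff_lt_or_eq.mp hi with h | h
        · rw [Function.update_of_ne (Nat.ne_of_lt h)]
          exact ih1 i h
        · subst h; rw [Function.update_self]; exact hd0
      · intro _
        rcases Nat.eq_zero_or_pos n with h | h
        · subst h
          rw [Function.update_self]
          norm_num at hdε
          linarith
        · rw [Function.update_of_ne (Nat.ne_of_lt h)]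
          exact ih2 h
      · intro i hi
        rcases Nat.lt_succ_iff_lt_or_eq.mp hi with h | h
        · rw [Function.update_of_ne (Nat.ne_of_lt h), 
            Function.update_of_ne (Nat.ne_of_lt (Nat.lt_of_succ_lt h))]
          exact ih3 i h
        · -- i+1 = n
          have hn0 : n ≠ 0 := by omega
          have hin : i ≠ n := by omega
          rw [h, Function.update_self, Function.update_of_ne hin]
          have : (if n = 0 then (1:ℝ) else g n (n-1) / 4) = g n (i) / 4 := by
            rw [if_neg hn0]
            congr 2
            omega
          rw [this] at hdε
          exact hdε.le
  -- coherence
  have hcoh : ∀ n i, i < n → g n i = g (i+1) i := by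
    intro n
    induction n with
    | zero => intro i hi; exact absurd hi (Nat.not_lt_zero _)
    | succ n ih =>
      intro i hi
      rcases Nat.lt_succ_iff_lt_or_eq.mp hi with h | h
      · rw [hgsucc n, Function.update_of_ne (Nat.ne_of_lt h)]
        exact ih i h
      · subst h; rfl
  refine ⟨fun i => g (i+1) i, ?_, ?_, ?_, ?_⟩
  · intro i
    exact (hInvAll (i+1)).1 i (Nat.lt_succ_self i)
  · exact (hInvAll 1).2.1 one_pos
  · intro i
    have h1 := (hInvAll (i+2)).2.2.1 i (by omega)
    rw [hcoh (i+2) (i+1) (by omega), hcoh (i+2) i (by omega)] at h1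
    exact h1
  · intro n m hm
    have h1 := (hInvAll n).2.2.2 m hm
    have h2 : ∑ i ∈ Finset.range n, (m i : ℝ) * g n i
        = ∑ i ∈ Finset.range n, (m i : ℝ) * g (i+1) i := by
      apply Finset.sum_congr rfl
      intro i hi
      rw [Finset.mem_range] at hi
      rw [hcoh n i hi]
    rw [h2] at h1
    exact h1

theorem stmt_19 (k : ℕ) (hk : 2 ≤ k) (c : ℝ → ℕ)
    (hc : ∀ i : ℕ, NullMeasurableSet (c ⁻¹' {i}) volume) :
    ∃ H : Set ℝ, #H = Cardinal.continuum ∧ ∃ i : ℕ, ∀ y ∈ kTimes k H, c y = i := by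
  classical
  have hk1 : 1 ≤ k := le_trans one_le_two hk
  have hkR : (0:ℝ) < k := by exact_mod_cast lt_of_lt_of_le two_pos hk
  -- Step 1: a colour class of positive measure
  have h1 : ∃ i : ℕ, volume (c ⁻¹' {i}) ≠ 0 := by
    by_contra h
    push_neg at h
    have h2 : volume (⋃ i : ℕ, c ⁻¹' {i}) = 0 := measure_iUnion_null h
    have huniv : (⋃ i : ℕ, c ⁻¹' {i}) = Set.univ := by
      ext x; simp
    rw [huniv, Real.volume_univ] at h2
    simp at h2
  obtain ⟨i₀, hi₀⟩ := h1
  set A : Set ℝ := c ⁻¹' {i₀} with hA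
  -- Step 2: positive measure in a bounded piece
  have h2 : ∃ n : ℕ, volume (A ∩ ball 0 n) ≠ 0 := by
    by_contra h
    push_neg at h
    have h3 : volume (⋃ n : ℕ, A ∩ ball (0:ℝ) n) = 0 := measure_iUnion_null h
    rw [← inter_iUnion, iUnion_ball_nat, inter_univ] at h3
    exact hi₀ h3
  obtain ⟨n, hn⟩ := h2
  have hAn : NullMeasurableSet (A ∩ ball (0:ℝ) n) volume :=
    (hc i₀).inter measurableSet_ball.nullMeasurableSet
  obtain ⟨T, hTsub, hTm, hTae⟩ := hAn.exists_measurable_subset_ae_eq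
  have hT0 : volume T ≠ 0 := by rw [measure_congr hTae]; exact hn
  have hTtop : volume T ≠ ⊤ :=
    ne_top_of_le_ne_top measure_ball_lt_top.ne
      (measure_mono (hTsub.trans inter_subset_right))
  obtain ⟨K, hKT, hKcomp, hKvol⟩ := hTm.exists_isCompact_lt_add hTtop (ε := volume T) hT0
  have hK0 : volume K ≠ 0 := by
    intro h
    rw [h, zero_add] at hKvol
    exact lt_irrefl _ hKvol
  have hKm : MeasurableSet K := hKcomp.isClosed.measurableSet
  have hKA : ∀ y ∈ K, c y = i₀ := fun y hy => (hKT.trans (hTsub.trans inter_subset_left)) hy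
  -- Step 3: density points
  set D : Set ℝ := {x : ℝ | Tendsto
    (fun r => volume (K ∩ closedBall x r) / volume (closedBall x r)) (𝓝[>] (0:ℝ)) (𝓝 1)}
    with hD
  set B : Set ℝ := K ∩ D with hB
  have hBK : B ⊆ K := inter_subset_left
  have hbes := Besicovitch.ae_tendsto_measure_inter_div_of_measurableSet (volume : Measure ℝ) hKm
  have hnull : volume (K \ B) = 0 := by
    have hsub : K \ B ⊆ {x : ℝ | ¬ Tendsto
        (fun r => volume (K ∩ closedBall x r) / volume (closedBall x r)) (𝓝[>] (0:ℝ))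
        (𝓝 (K.indicator 1 x))} := by
      rintro x ⟨hxK, hxB⟩
      intro hT
      apply hxB
      refine ⟨hxK, ?_⟩
      have hT' := hT
      rw [Set.indicator_of_mem hxK, Pi.one_apply] at hT'
      exact hT'
    exact measure_mono_null hsub (ae_iff.mp hbes)
  have hdens : ∀ x ∈ B, Tendsto
      (fun r => volume (K ∩ closedBall x r) / volume (closedBall x r)) (𝓝[>] (0:ℝ)) (𝓝 1) :=
    fun x hx => hx.2
  have hBne : B.Nonempty := by
    by_contra h
    rw [not_nonempty_iff_eq_empty] at h
    rw [h, diff_empty] at hnull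
    exact hK0 hnull
  obtain ⟨b, hbB⟩ := hBne
  -- Step 4: fusion
  have hP : ∀ S : Finset ℝ, ↑S ⊆ B → ∀ ε : ℝ, 0 < ε →
      ∃ δ : ℝ, 0 < δ ∧ δ < ε ∧ ∀ s ∈ S, ∀ j : ℕ, j ≤ k → s + j * δ ∈ B :=
    fun S hS ε hε => keyP hk1 hKm hBK hnull hdens S hS hε
  obtain ⟨δ, hδpos, hδone, hδratio, hδsum⟩ := fusion hbB hP
  -- geometric bounds
  have hgeo : ∀ i, δ i ≤ (1/2:ℝ)^i := by
    intro i
    induction i with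
    | zero => simpa using hδone
    | succ i ih =>
      have h5 := hδratio i
      have h6 : (0:ℝ) < (1/2:ℝ)^i := by positivity
      calc δ (i+1) ≤ δ i / 4 := h5
        _ ≤ (1/2:ℝ)^i / 2 := by nlinarith
        _ = (1/2:ℝ)^(i+1) := by ring
  have hδsummable : Summable δ :=
    Summable.of_nonneg_of_le (fun i => (hδpos i).le) hgeo summable_geometric_two
  have hhalfstep : ∀ j i : ℕ, δ (j + i) ≤ δ j * (1/2:ℝ)^i := by
    intro j i
    induction i with
    | zero => simp
    | succ i ih =>
      have h5 := hδratio (j+i)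
      have h6 : (0:ℝ) < δ j * (1/2:ℝ)^i := mul_pos (hδpos j) (by positivity)
      calc δ (j + (i+1)) = δ ((j+i)+1) := by rw [Nat.add_succ]
        _ ≤ δ (j+i) / 4 := h5
        _ ≤ (δ j * (1/2:ℝ)^i) / 2 := by nlinarith
        _ = δ j * (1/2:ℝ)^(i+1) := by ring
  -- the branch map
  set e : (ℕ → Bool) → ℕ → ℝ := fun σ i => if σ i then δ i else 0 with he
  have hesum : ∀ σ, Summable (e σ) := by
    intro σ
    refine Summable.of_nonneg_of_le (fun i => ?_) (fun i => ?_) hδsummable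
    · by_cases h : σ i <;> simp [he, h, (hδpos i).le]
    · by_cases h : σ i <;> simp [he, h, (hδpos i).le]
  have hebd : ∀ σ i, 0 ≤ e σ i ∧ e σ i ≤ δ i := by
    intro σ i
    constructor
    · by_cases h : σ i <;> simp [he, h, (hδpos i).le]
    · by_cases h : σ i <;> simp [he, h, (hδpos i).le]
  set x : (ℕ → Bool) → ℝ := fun σ => b / k + ∑' i, e σ i with hx
  -- key strict monotonicity for injectivity
  have hkey : ∀ σ τ : ℕ → Bool, ∀ n : ℕ, (∀ i, i < n → σ i = τ i) →
      σ n = true → τ n = false → ∑' i, e τ i < ∑' i, e σ i := by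
    intro σ τ n hagree hσn hτn
    set d : ℕ → ℝ := fun i => e σ i - e τ i with hdd
    have hd : Summable d := (hesum σ).sub (hesum τ)
    have hsubeq : ∑' i, d i = ∑' i, e σ i - ∑' i, e τ i :=
      Summable.tsum_sub (hesum σ) (hesum τ)
    have hsplit := Summable.sum_add_tsum_nat_add (f := d) (n+1) hd
    have hhead : ∑ i ∈ Finset.range (n+1), d i = δ n := by
      rw [Finset.sum_range_succ]
      have h1 : ∑ i ∈ Finset.range n, d i = 0 := by
        apply Finset.sum_eq_zero
        intro i hi
        rw [Finset.mem_range] at hi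
        simp [hdd, he, hagree i hi]
      rw [h1, zero_add]
      simp [hdd, he, hσn, hτn]
    have hsum1 : Summable (fun i => δ (i+(n+1))) := (summable_nat_add_iff (n+1)).mpr hδsummable
    have hsum2 : Summable (fun i => d (i+(n+1))) := (summable_nat_add_iff (n+1)).mpr hd
    have htail : -(δ n / 2) ≤ ∑' i, d (i+(n+1)) := by
      have hbound : ∀ i, -(δ (i+(n+1))) ≤ d (i+(n+1)) := by
        intro i
        have h1 := (hebd σ (i+(n+1))).1
        have h2 := (hebd τ (i+(n+1))).2
        simp only [hdd]
        linarith
      have h3 : ∑' i, -(δ (i+(n+1))) ≤ ∑' i, d (i+(n+1)) :=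
        Summable.tsum_le_tsum hbound hsum1.neg hsum2
      rw [tsum_neg] at h3
      have h4 : ∑' i, δ (i+(n+1)) ≤ δ n / 2 := by
        have hb2 : ∀ i, δ (i+(n+1)) ≤ δ (n+1) * (1/2:ℝ)^i := by
          intro i
          have h7 : i + (n+1) = (n+1) + i := by omega
          rw [h7]
          exact hhalfstep (n+1) i
        calc ∑' i, δ (i+(n+1)) ≤ ∑' i, δ (n+1) * (1/2:ℝ)^i :=
              Summable.tsum_le_tsum hb2 hsum1 (summable_geometric_two.mul_left _)
          _ = δ (n+1) * 2 := by rw [tsum_mul_left, tsum_geometric_two]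
          _ ≤ (δ n / 4) * 2 := by nlinarith [hδratio n]
          _ = δ n / 2 := by ring
      linarith
    have hpos : 0 < ∑' i, d i := by
      rw [← hsplit, hhead]
      have h8 := hδpos n
      linarith
    rw [hsubeq] at hpos
    linarith
  have hinj : Function.Injective x := by
    intro σ τ hxy
    by_contra hne
    have hex : ∃ m, σ m ≠ τ m := by
      by_contra h
      push_neg at h
      exact hne (funext h)
    have hts : ∑' i, e σ i = ∑' i, e τ i := by
      have hxy' : b / (k:ℝ) + ∑' i, e σ i = b / (k:ℝ) + ∑' i, e τ i := hxy
      linarith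
    set m := Nat.find hex with hm
    have hnd : σ m ≠ τ m := Nat.find_spec hex
    have hmin : ∀ i, i < m → σ i = τ i := fun i hi => not_not.mp (Nat.find_min hex hi)
    cases hσv : σ m with
    | true =>
      have hτv : τ m = false := by
        cases hτ : τ m
        · rfl
        · exact absurd (hσv.trans hτ.symm) hnd
      have := hkey σ τ m hmin hσv hτv
      linarith
    | false =>
      have hτv : τ m = true := by
        cases hτ : τ m
        · exact absurd (hσv.trans hτ.symm) hnd
        · rfl
      have := hkey τ σ m (fun i hi => (hmin i hi).symm) hτv hσv
      linarith
  -- the set H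
  refine ⟨Set.range x, ?_, i₀, ?_⟩
  · rw [Cardinal.mk_range_eq x hinj]
    have h1 : #(ℕ → Bool) = (2:Cardinal) ^ Cardinal.aleph0 := by
      rw [Cardinal.mk_arrow]
      simp
    rw [h1, Cardinal.two_power_aleph0]
  · rintro y ⟨f, hf, rfl⟩
    choose σ hσ using fun t => hf t
    set m : ℕ → ℕ := fun i => (Finset.univ.filter (fun t : Fin k => σ t i = true)).card with hmm
    have hmk : ∀ i, m i ≤ k := by
      intro i
      calc m i ≤ Finset.univ.card := Finset.card_filter_le _ _
        _ = k := by simp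
    have hei : ∀ i, ∑ t : Fin k, e (σ t) i = (m i : ℝ) * δ i := by
      intro i
      rw [hmm]
      simp only [he]
      rw [Finset.sum_ite, Finset.sum_const_zero, add_zero, Finset.sum_const, nsmul_eq_mul]
    have hswap : ∑ t : Fin k, x (σ t) = b + ∑' i, (m i : ℝ) * δ i := by
      have h1 : ∑ t : Fin k, x (σ t) = ∑ t : Fin k, (b / (k:ℝ) + ∑' i, e (σ t) i) := rfl
      rw [h1, Finset.sum_add_distrib, Finset.sum_const]
      have h2 : ∑ t : Fin k, ∑' i, e (σ t) i = ∑' i, ∑ t : Fin k, e (σ t) i :=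
        (Summable.tsum_finsetSum (fun t _ => hesum (σ t))).symm
      rw [h2]
      have h3 : ∑' i, ∑ t : Fin k, e (σ t) i = ∑' i, (m i : ℝ) * δ i := by
        congr 1
        funext i
        exact hei i
      rw [h3]
      congr 1
      simp only [Finset.card_univ, Fintype.card_fin, nsmul_eq_mul]
      field_simp
    have hsummm : Summable (fun i => (m i : ℝ) * δ i) := by
      refine Summable.of_nonneg_of_le (fun i => mul_nonneg (Nat.cast_nonneg _) (hδpos i).le)
        (fun i => ?_) (hδsummable.mul_left (k:ℝ))
      have : (m i : ℝ) ≤ k := by exact_mod_cast hmk i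
      nlinarith [(hδpos i).le]
    have htend : Tendsto (fun N => b + ∑ i ∈ Finset.range N, (m i : ℝ) * δ i) atTop
        (𝓝 (b + ∑' i, (m i : ℝ) * δ i)) :=
      tendsto_const_nhds.add hsummm.hasSum.tendsto_sum_nat
    have hmemK : b + ∑' i, (m i : ℝ) * δ i ∈ K :=
      hKcomp.isClosed.mem_of_tendsto htend
        (Filter.Eventually.of_forall fun N => hBK (hδsum N m hmk))
    have hy : ∑ t : Fin k, f t = b + ∑' i, (m i : ℝ) * δ i := by
      rw [← hswap]
      apply Finset.sum_congr rfl
      intro t _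
      exact (hσ t).symm
    rw [hy]
    exact hKA _ hmemK
end
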